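/- Suppose a family of probabilities satisfies: for every ε > 0 there exist A, N such that for all n ≥ N and z ∈ [A, (3/2)ln n − A], |e^z·P(M_n^{kill} ∈ [a_n(z)−1, a_n(z))) − C₂| ≤ ε, where a_n(z) = (3/2)ln n − z and C₂ > 0, and additionally P(M_n^{kill} ≤ r) ≤ c(r)n^{-3/2} for all r ≥ 0. Then with C₁ := C₂/(1−e^{-1}), for every ε > 0 there exist A', N' such that for all n ≥ N' and z ∈ [A', (3/2)ln n − A'], |e^z·P(M_n^{kill} < (3/2)ln n − z) − C₁| ≤ ε. -/

import Mathlib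

open MeasureTheory

lemma split_lemma {Ω : Type*} [MeasurableSpace Ω] (μ : Measure Ω) [IsProbabilityMeasure μ]
    (f : Ω → EReal) (hf : Measurable f) (b : ℝ) :
    (μ {ω | f ω < (b : ℝ)}).toReal =
      (μ {ω | ((b - 1 : ℝ) : EReal) ≤ f ω ∧ f ω < ((b : ℝ) : EReal)}).toReal +
      (μ {ω | f ω < ((b - 1 : ℝ) : EReal)}).toReal := by
  have hset : {ω | f ω < ((b : ℝ) : EReal)} =
      {ω | ((b - 1 : ℝ) : EReal) ≤ f ω ∧ f ω < ((b : ℝ) : EReal)} ∪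
      {ω | f ω < ((b - 1 : ℝ) : EReal)} := by
    ext ω
    simp only [Set.mem_setOf_eq, Set.mem_union]
    constructor
    · intro h
      rcases le_or_gt ((b - 1 : ℝ) : EReal) (f ω) with h' | h'
      · exact Or.inl ⟨h', h⟩
      · exact Or.inr h'
    · rintro (⟨_, h⟩ | h)
      · exact h
      · exact h.trans_le (by exact_mod_cast EReal.coe_le_coe_iff.mpr (by linarith))
  have hm1 : MeasurableSet {ω | ((b - 1 : ℝ) : EReal) ≤ f ω ∧ f ω < ((b : ℝ) : EReal)} := by
    exact (hf measurableSet_Ico : MeasurableSet (f ⁻¹' Set.Ico _ _))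
  have hm2 : MeasurableSet {ω | f ω < ((b - 1 : ℝ) : EReal)} :=
    hf measurableSet_Iio
  have hdisj : Disjoint {ω | ((b - 1 : ℝ) : EReal) ≤ f ω ∧ f ω < ((b : ℝ) : EReal)}
      {ω | f ω < ((b - 1 : ℝ) : EReal)} := by
    rw [Set.disjoint_left]
    rintro ω ⟨h1, _⟩ h2
    exact absurd h1 (not_le.mpr h2)
  rw [hset, measure_union hdisj hm2,
    ENNReal.toReal_add (measure_ne_top μ _) (measure_ne_top μ _)]

lemma telescope_lemma {Ω : Type*} [MeasurableSpace Ω] (μ : Measure Ω) [IsProbabilityMeasure μ]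
    (f : Ω → EReal) (hf : Measurable f) (L z : ℝ) :
    ∀ K : ℕ, (μ {ω | f ω < ((L - z : ℝ) : EReal)}).toReal =
      (∑ k ∈ Finset.range K,
        (μ {ω | ((L - (z + k) - 1 : ℝ) : EReal) ≤ f ω ∧
                f ω < ((L - (z + k) : ℝ) : EReal)}).toReal) +
      (μ {ω | f ω < ((L - z - K : ℝ) : EReal)}).toReal := by
  intro K
  induction K with
  | zero => simp
  | succ K ih =>
    rw [ih, Finset.sum_range_succ]
    have hb : (μ {ω | f ω < ((L - z - K : ℝ) : EReal)}).toReal =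
        (μ {ω | ((L - z - K - 1 : ℝ) : EReal) ≤ f ω ∧
                f ω < ((L - z - K : ℝ) : EReal)}).toReal +
        (μ {ω | f ω < ((L - z - K - 1 : ℝ) : EReal)}).toReal :=
      split_lemma μ f hf (L - z - K)
    rw [hb]
    have e1 : (L - z - (K:ℝ) - 1) = (L - (z + (K:ℝ)) - 1) := by ring
    have e2 : (L - z - (K:ℝ)) = (L - (z + (K:ℝ))) := by ring
    have e3 : (L - (z + (K:ℝ)) - 1) = (L - z - ((K:ℕ)+1 : ℕ)) := by push_cast; ring
    rw [e1, e2, e3]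
    ring

/-- From the interval asymptotics `e^z P(M_n ∈ [a_n(z)-1, a_n(z))) ≈ C₂` (uniformly for
`z ∈ [A, (3/2)ln n − A]`, `n` large), where `a_n(z) = (3/2)ln n − z`, together with the
polynomial bound `P(M_n ≤ r) ≤ c(r) n^{-3/2}`, one deduces the tail asymptotics
`e^z P(M_n < (3/2)ln n − z) ≈ C₁ := C₂/(1−e^{-1})`, uniformly for
`z ∈ [A', (3/2)ln n − A']`, `n` large. -/
theorem stmt16 {Ω : Type*} [MeasurableSpace Ω] (μ : Measure Ω) [IsProbabilityMeasure μ]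
    (M : ℕ → Ω → EReal) (hM : ∀ n, Measurable (M n))
    (C₂ : ℝ) (hC₂ : 0 < C₂)
    (hinterval : ∀ ε > (0 : ℝ), ∃ A : ℝ, ∃ N : ℕ, ∀ n ≥ N,
      ∀ z : ℝ, A ≤ z → z ≤ (3 / 2) * Real.log n - A →
        |Real.exp z *
            (μ {ω | ((3 / 2) * Real.log n - z - 1 : ℝ) ≤ M n ω ∧
                    M n ω < ((3 / 2) * Real.log n - z : ℝ)}).toReal - C₂| ≤ ε)
    (c : ℝ → ℝ)
    (htail : ∀ n : ℕ, 1 ≤ n → ∀ r ≥ (0 : ℝ),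
      (μ {ω | M n ω ≤ (r : ℝ)}).toReal ≤ c r * (n : ℝ) ^ (-(3 : ℝ) / 2)) :
    ∀ ε > (0 : ℝ), ∃ A' : ℝ, ∃ N' : ℕ, ∀ n ≥ N',
      ∀ z : ℝ, A' ≤ z → z ≤ (3 / 2) * Real.log n - A' →
        |Real.exp z *
            (μ {ω | M n ω < ((3 / 2) * Real.log n - z : ℝ)}).toReal -
          C₂ / (1 - Real.exp (-1))| ≤ ε := by
  intro ε hε
  set r : ℝ := Real.exp (-1) with hr_def
  have hr0 : 0 < r := Real.exp_pos _
  have hr1 : r < 1 := by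
    rw [hr_def, ← Real.exp_zero]
    exact Real.exp_lt_exp.mpr (by norm_num)
  set D : ℝ := 1 - r with hD_def
  have hD : 0 < D := by simp only [hD_def]; linarith
  set ε₀ : ℝ := ε * D / 3 with hε₀_def
  have hε₀ : 0 < ε₀ := by positivity
  obtain ⟨A, N, hAN⟩ := hinterval ε₀ hε₀
  set A₀ : ℝ := max A 0 with hA₀_def
  have hA₀0 : 0 ≤ A₀ := le_max_right _ _
  have hAA₀ : A ≤ A₀ := le_max_left _ _
  set c' : ℝ := max (c (A₀ + 1)) 0 with hc'_def
  have hc'0 : 0 ≤ c' := le_max_right _ _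
  have hc'le : c (A₀ + 1) ≤ c' := le_max_left _ _
  set B : ℝ := max 0 (Real.log (3 * (c' + 1) / ε)) with hB_def
  have hB0 : 0 ≤ B := le_max_left _ _
  set B₂ : ℝ := max 0 (Real.log (3 * C₂ * Real.exp (A₀ + 1) / (D * ε))) with hB₂_def
  have hB₂0 : 0 ≤ B₂ := le_max_left _ _
  set A' : ℝ := A₀ + 1 + B + B₂ with hA'_def
  -- key smallness facts
  have h1 : Real.exp (-A') * c' ≤ ε / 3 := by
    have ht : (0:ℝ) < 3 * (c' + 1) / ε := by positivity
    have h1a : Real.exp (-A') ≤ ε / (3 * (c' + 1)) := by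
      have hle : Real.exp (-A') ≤ Real.exp (-B) :=
        Real.exp_le_exp.mpr (by simp only [hA'_def]; linarith)
      have hBt : 3 * (c' + 1) / ε ≤ Real.exp B := by
        calc 3 * (c' + 1) / ε = Real.exp (Real.log (3 * (c' + 1) / ε)) :=
              (Real.exp_log ht).symm
          _ ≤ Real.exp B := Real.exp_le_exp.mpr (le_max_right _ _)
      have : Real.exp (-B) ≤ ε / (3 * (c' + 1)) := by
        rw [Real.exp_neg]
        rw [inv_le_comm₀ (Real.exp_pos _) (by positivity)]
        calc (ε / (3 * (c' + 1)))⁻¹ = 3 * (c' + 1) / ε := by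
              rw [inv_div]
          _ ≤ Real.exp B := hBt
      linarith
    calc Real.exp (-A') * c' ≤ (ε / (3 * (c' + 1))) * c' := by
          apply mul_le_mul_of_nonneg_right h1a hc'0
      _ ≤ ε / 3 := by
          rw [div_mul_eq_mul_div, div_le_div_iff₀ (by positivity) (by norm_num)]
          nlinarith
  have h2 : C₂ / D * (Real.exp (A₀ + 1) * Real.exp (-A')) ≤ ε / 3 := by
    have ht : (0:ℝ) < 3 * C₂ * Real.exp (A₀ + 1) / (D * ε) := by positivity
    have h2a : Real.exp (-A') ≤ D * ε / (3 * C₂ * Real.exp (A₀ + 1)) := by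
      have hle : Real.exp (-A') ≤ Real.exp (-B₂) :=
        Real.exp_le_exp.mpr (by simp only [hA'_def]; linarith)
      have hBt : 3 * C₂ * Real.exp (A₀ + 1) / (D * ε) ≤ Real.exp B₂ := by
        calc 3 * C₂ * Real.exp (A₀ + 1) / (D * ε)
            = Real.exp (Real.log (3 * C₂ * Real.exp (A₀ + 1) / (D * ε))) :=
              (Real.exp_log ht).symm
          _ ≤ Real.exp B₂ := Real.exp_le_exp.mpr (le_max_right _ _)
      have : Real.exp (-B₂) ≤ D * ε / (3 * C₂ * Real.exp (A₀ + 1)) := by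
        rw [Real.exp_neg]
        rw [inv_le_comm₀ (Real.exp_pos _) (by positivity)]
        calc (D * ε / (3 * C₂ * Real.exp (A₀ + 1)))⁻¹
            = 3 * C₂ * Real.exp (A₀ + 1) / (D * ε) := by rw [inv_div]
          _ ≤ Real.exp B₂ := hBt
      linarith
    calc C₂ / D * (Real.exp (A₀ + 1) * Real.exp (-A'))
        ≤ C₂ / D * (Real.exp (A₀ + 1) * (D * ε / (3 * C₂ * Real.exp (A₀ + 1)))) := by
          apply mul_le_mul_of_nonneg_left _ (by positivity)
          exact mul_le_mul_of_nonneg_left h2a (Real.exp_pos _).le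
      _ = ε / 3 := by
          field_simp
  refine ⟨A', max N 1, ?_⟩
  intro n hn z hz1 hz2
  have hnN : N ≤ n := le_trans (le_max_left _ _) hn
  have hn1 : 1 ≤ n := le_trans (le_max_right _ _) hn
  have hnpos : (0:ℝ) < n := by exact_mod_cast hn1
  set L : ℝ := (3 / 2) * Real.log n with hL_def
  have hzA₀ : A₀ + 1 ≤ z := by
    have : A₀ + 1 ≤ A' := by simp only [hA'_def]; linarith
    linarith
  have ht1 : 1 ≤ L - z - A₀ := by
    have : z ≤ L - A' := hz2
    simp only [hA'_def] at this
    linarith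
  set K : ℕ := ⌊L - z - A₀⌋₊ with hK_def
  have hKle : (K:ℝ) ≤ L - z - A₀ := Nat.floor_le (by linarith)
  have hKgt : L - z - A₀ - 1 < K := Nat.sub_one_lt_floor _
  -- interval estimates
  have hq : ∀ k ∈ Finset.range K,
      |Real.exp z * (μ {ω | ((L - (z + k) - 1 : ℝ) : EReal) ≤ M n ω ∧
          M n ω < ((L - (z + k) : ℝ) : EReal)}).toReal - C₂ * r ^ k| ≤ ε₀ * r ^ k := by
    intro k hk
    have hkK : (k:ℝ) + 1 ≤ K := by exact_mod_cast Nat.succ_le_of_lt (Finset.mem_range.mp hk)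
    have hz1' : A ≤ z + k := by
      have : (0:ℝ) ≤ k := Nat.cast_nonneg _
      linarith
    have hz2' : z + k ≤ (3/2) * Real.log n - A := by
      rw [← hL_def]
      linarith
    have hbase := hAN n hnN (z + k) hz1' hz2'
    rw [← hL_def] at hbase
    have hrk : r ^ k = Real.exp (-(k:ℝ)) := by
      rw [hr_def, ← Real.exp_nat_mul]
      congr 1
      ring
    have hmul : Real.exp (-(k:ℝ)) * Real.exp (z + k) = Real.exp z := by
      rw [← Real.exp_add]
      congr 1
      ring
    set p : ℝ := (μ {ω | ((L - (z + k) - 1 : ℝ) : EReal) ≤ M n ω ∧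
          M n ω < ((L - (z + k) : ℝ) : EReal)}).toReal with hp_def
    have he : Real.exp z * p - C₂ * r ^ k =
        Real.exp (-(k:ℝ)) * (Real.exp (z + k) * p - C₂) := by
      rw [hrk, mul_sub, ← mul_assoc, hmul]
      ring
    rw [he, abs_mul, abs_of_pos (Real.exp_pos _), hrk]
    have := mul_le_mul_of_nonneg_left hbase (Real.exp_pos (-(k:ℝ))).le
    linarith
  -- telescoping
  have htele := telescope_lemma μ (M n) (hM n) L z K
  rw [htele]
  -- geometric sum facts
  have hgeom : ∑ k ∈ Finset.range K, r ^ k = (1 - r ^ K) / D := by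
    rw [geom_sum_eq hr1.ne K, hD_def]
    rw [div_eq_div_iff (by linarith) (by linarith)]
    ring
  have hrK0 : (0:ℝ) ≤ r ^ K := by positivity
  have hrK1 : r ^ K ≤ 1 := pow_le_one₀ hr0.le hr1.le
  have hS1 : ∑ k ∈ Finset.range K, r ^ k ≤ 1 / D := by
    rw [hgeom]
    gcongr
    linarith
  set T : ℝ := (μ {ω | M n ω < ((L - z - K : ℝ) : EReal)}).toReal with hT_def
  have hT0 : 0 ≤ T := ENNReal.toReal_nonneg
  set SS : ℝ := ∑ k ∈ Finset.range K,
      (μ {ω | ((L - (z + k) - 1 : ℝ) : EReal) ≤ M n ω ∧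
              M n ω < ((L - (z + k) : ℝ) : EReal)}).toReal with hSS_def
  have hsum : |Real.exp z * SS - C₂ * ∑ k ∈ Finset.range K, r ^ k| ≤ ε₀ / D := by
    rw [hSS_def, Finset.mul_sum, Finset.mul_sum, ← Finset.sum_sub_distrib]
    refine le_trans (Finset.abs_sum_le_sum_abs _ _) ?_
    refine le_trans (Finset.sum_le_sum hq) ?_
    rw [← Finset.mul_sum]
    calc ε₀ * ∑ k ∈ Finset.range K, r ^ k ≤ ε₀ * (1 / D) :=
        mul_le_mul_of_nonneg_left hS1 hε₀.le
      _ = ε₀ / D := by ring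
  have hCS : |C₂ * (∑ k ∈ Finset.range K, r ^ k) - C₂ / D| ≤ ε / 3 := by
    rw [hgeom]
    have he : C₂ * ((1 - r ^ K) / D) - C₂ / D = -(C₂ / D * r ^ K) := by
      field_simp
      ring
    rw [he, abs_neg, abs_of_nonneg (by positivity)]
    have hrKe : r ^ K ≤ Real.exp (A₀ + 1) * Real.exp (-A') := by
      have hKexp : r ^ K = Real.exp (-(K:ℝ)) := by
        rw [hr_def, ← Real.exp_nat_mul]
        congr 1
        ring
      rw [hKexp, ← Real.exp_add]
      apply Real.exp_le_exp.mpr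
      linarith [hKgt, hz2]
    exact le_trans (mul_le_mul_of_nonneg_left hrKe (by positivity)) h2
  have hTsub : T ≤ c' * (n:ℝ) ^ (-(3:ℝ)/2) := by
    have hsub : {ω | M n ω < ((L - z - K : ℝ) : EReal)} ⊆
        {ω | M n ω ≤ ((A₀ + 1 : ℝ) : EReal)} := by
      intro ω hω
      have hle : ((L - z - K : ℝ) : EReal) ≤ ((A₀ + 1 : ℝ) : EReal) :=
        EReal.coe_le_coe_iff.mpr (by linarith [hKgt])
      exact le_trans (le_of_lt hω) hle
    calc T ≤ (μ {ω | M n ω ≤ ((A₀ + 1 : ℝ) : EReal)}).toReal :=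
        ENNReal.toReal_mono (measure_ne_top μ _) (measure_mono hsub)
      _ ≤ c (A₀ + 1) * (n:ℝ) ^ (-(3:ℝ)/2) := htail n hn1 (A₀ + 1) (by linarith)
      _ ≤ c' * (n:ℝ) ^ (-(3:ℝ)/2) :=
        mul_le_mul_of_nonneg_right hc'le (Real.rpow_nonneg hnpos.le _)
  have hexpz : Real.exp z ≤ (n:ℝ) ^ ((3:ℝ)/2) * Real.exp (-A') := by
    have hL2 : (n:ℝ) ^ ((3:ℝ)/2) = Real.exp L := by
      rw [Real.rpow_def_of_pos hnpos, hL_def]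
      congr 1
      ring
    rw [hL2, ← Real.exp_add]
    exact Real.exp_le_exp.mpr (by linarith [hz2])
  have hTfin : Real.exp z * T ≤ ε / 3 := by
    have hmul : Real.exp z * T ≤
        ((n:ℝ) ^ ((3:ℝ)/2) * Real.exp (-A')) * (c' * (n:ℝ) ^ (-(3:ℝ)/2)) :=
      mul_le_mul hexpz hTsub hT0 (by positivity)
    have hpow : (n:ℝ) ^ ((3:ℝ)/2) * (n:ℝ) ^ (-(3:ℝ)/2) = 1 := by
      rw [← Real.rpow_add hnpos]
      norm_num
    have heq : ((n:ℝ) ^ ((3:ℝ)/2) * Real.exp (-A')) * (c' * (n:ℝ) ^ (-(3:ℝ)/2)) =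
        Real.exp (-A') * c' * ((n:ℝ) ^ ((3:ℝ)/2) * (n:ℝ) ^ (-(3:ℝ)/2)) := by ring
    rw [heq, hpow, mul_one] at hmul
    linarith [h1]
  have hε₀D : ε₀ / D = ε / 3 := by
    rw [hε₀_def]
    field_simp
  have key : Real.exp z * (SS + T) - C₂ / D =
      (Real.exp z * SS - C₂ * ∑ k ∈ Finset.range K, r ^ k) +
      (C₂ * (∑ k ∈ Finset.range K, r ^ k) - C₂ / D) + Real.exp z * T := by ring
  have habs : |Real.exp z * (SS + T) - C₂ / D| ≤
      |Real.exp z * SS - C₂ * ∑ k ∈ Finset.range K, r ^ k| +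
      |C₂ * (∑ k ∈ Finset.range K, r ^ k) - C₂ / D| + (Real.exp z * T) := by
    rw [key]
    refine le_trans (abs_add_le _ _) ?_
    have h3 : |Real.exp z * T| = Real.exp z * T :=
      abs_of_nonneg (mul_nonneg (Real.exp_pos _).le hT0)
    rw [h3]
    exact add_le_add (abs_add_le _ _) le_rfl
  have hTnn : 0 ≤ Real.exp z * T := mul_nonneg (Real.exp_pos _).le hT0
  linarith [hsum, hCS, hTfin, habs]
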